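/- Let A be an n×n matrix with zero diagonal and ‖A‖_∞ ≤ 1 (maximum absolute row sum at most 1), and let 0 < η < 1. Draw a random subset I' ⊆ [n] by including each i independently with probability η/2, and let I = {i ∈ I' : Σ_{k∈I'} |A_{ik}| ≤ η}. Then for each fixed i ∈ [n], Pr[i ∈ I] ≥ η/4. -/

import Mathlib

open Finset

lemma sum_prod_bool' {n : ℕ} (g : Fin n → Bool → ℝ) :
    ∑ σ : Fin n → Bool, ∏ j, g j (σ j) = ∏ j, (g j true + g j false) := by
  have h := Finset.prod_univ_sum (fun _ : Fin n => (Finset.univ : Finset Bool)) (fun j b => g j b)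
  simp only [Fintype.piFinset_univ, Fintype.sum_bool] at h
  exact h.symm

lemma aux_marginal {n : ℕ} (η : ℝ) (S : Finset (Fin n)) :
    ∑ σ : Fin n → Bool, (∏ j ∈ S, (if σ j then (1:ℝ) else 0)) *
      ∏ j, (if σ j then η/2 else 1 - η/2) = (η/2)^S.card := by
  have key : ∀ σ : Fin n → Bool,
      (∏ j ∈ S, (if σ j then (1:ℝ) else 0)) * ∏ j, (if σ j then η/2 else 1-η/2)
      = ∏ j, ((if j ∈ S then (if σ j then (1:ℝ) else 0) else 1) *
          (if σ j then η/2 else 1-η/2)) := by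
    intro σ
    rw [Finset.prod_mul_distrib]
    congr 1
    rw [Finset.prod_ite_mem, Finset.univ_inter]
  simp_rw [key]
  rw [sum_prod_bool' (fun j b => (if j ∈ S then (if b then (1:ℝ) else 0) else 1) *
      (if b then η/2 else 1-η/2))]
  have step : (∏ j : Fin n, ((if j ∈ S then (if (true:Bool) = true then (1:ℝ) else 0) else 1) *
        (if (true:Bool) = true then η/2 else 1-η/2) +
      (if j ∈ S then (if (false:Bool) = true then (1:ℝ) else 0) else 1) *
        (if (false:Bool) = true then η/2 else 1-η/2)))
      = ∏ j : Fin n, (if j ∈ S then η/2 else 1) := by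
    refine Finset.prod_congr rfl fun j _ => ?_
    by_cases h : j ∈ S <;> simp [h]
  rw [step, Finset.prod_ite_mem, Finset.univ_inter, Finset.prod_const]

theorem stmt_11 {n : ℕ} (A : Matrix (Fin n) (Fin n) ℝ) (η : ℝ)
    (hη0 : 0 < η) (hη1 : η < 1)
    (hdiag : ∀ i, A i i = 0) (hrow : ∀ i, ∑ j, |A i j| ≤ 1)
    (i : Fin n)
    -- `w σ` : probability of the inclusion pattern `σ` when each index is
    -- included independently with probability `η/2`
    (w : (Fin n → Bool) → ℝ)
    (hw : ∀ σ, w σ = ∏ j, (if σ j then η / 2 else 1 - η / 2)) :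
    η / 4 ≤ ∑ σ ∈ Finset.univ.filter (fun σ : Fin n → Bool =>
        σ i = true ∧ ∑ k ∈ Finset.univ.filter (fun k => σ k = true), |A i k| ≤ η), w σ := by
  classical
  set g : (Fin n → Bool) → ℝ :=
    fun σ => ∑ k ∈ Finset.univ.filter (fun k => σ k = true), |A i k| with hg
  have hw0 : ∀ σ, 0 ≤ w σ := by
    intro σ; rw [hw]
    refine Finset.prod_nonneg fun j _ => ?_
    by_cases h : σ j <;> simp [h] <;> linarith
  have hg0 : ∀ σ, 0 ≤ g σ := fun σ => Finset.sum_nonneg fun k _ => abs_nonneg _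
  set F : Finset (Fin n → Bool) := Finset.univ.filter (fun σ => σ i = true) with hF
  -- first marginal
  have h1 : ∑ σ ∈ F, w σ = η / 2 := by
    have := aux_marginal η ({i} : Finset (Fin n))
    simp only [Finset.prod_singleton, Finset.card_singleton, pow_one] at this
    rw [hF, Finset.sum_filter]
    rw [← this]
    refine Finset.sum_congr rfl fun σ _ => ?_
    by_cases h : σ i = true <;> simp [h, hw]
  -- second moment bound
  have h2 : ∑ σ ∈ F, w σ * g σ ≤ η / 2 * (η / 2) := by
    have hrew : ∑ σ ∈ F, w σ * g σ
        = ∑ k, ∑ σ ∈ F, w σ * (if σ k = true then |A i k| else 0) := by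
      rw [Finset.sum_comm]
      refine Finset.sum_congr rfl fun σ _ => ?_
      simp only [hg, Finset.sum_filter, Finset.mul_sum]
    rw [hrew]
    have hterm : ∀ k : Fin n, ∑ σ ∈ F, w σ * (if σ k = true then |A i k| else 0)
        ≤ η / 2 * (η / 2) * |A i k| := by
      intro k
      by_cases hk : k = i
      · have : ∀ σ ∈ F, w σ * (if σ k = true then |A i k| else 0) = 0 := by
          intro σ _
          rw [hk, hdiag i]
          by_cases h : σ k = true <;> simp [h]
        rw [Finset.sum_congr rfl this, Finset.sum_const, smul_zero]
        positivity
      · have hm : ∑ σ ∈ F, w σ * (if σ k = true then |A i k| else 0)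
            = (∑ σ : Fin n → Bool, (∏ j ∈ ({i, k} : Finset (Fin n)),
                (if σ j then (1:ℝ) else 0)) *
              ∏ j, (if σ j then η/2 else 1 - η/2)) * |A i k| := by
          rw [Finset.sum_mul, hF, Finset.sum_filter]
          refine Finset.sum_congr rfl fun σ _ => ?_
          rw [Finset.prod_pair (Ne.symm hk)]
          by_cases h1 : σ i = true <;> by_cases h2 : σ k = true <;>
            simp [h1, h2, hw]
        rw [hm, aux_marginal η ({i, k} : Finset (Fin n)),
          Finset.card_pair (Ne.symm hk)]
        rw [show ((η/2)^2 : ℝ) = η/2 * (η/2) by ring]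
    calc ∑ k, ∑ σ ∈ F, w σ * (if σ k = true then |A i k| else 0)
        ≤ ∑ k, η / 2 * (η / 2) * |A i k| := Finset.sum_le_sum fun k _ => hterm k
      _ = η / 2 * (η / 2) * ∑ k, |A i k| := by rw [Finset.mul_sum]
      _ ≤ η / 2 * (η / 2) * 1 := by
          refine mul_le_mul_of_nonneg_left (hrow i) (by positivity)
      _ = η / 2 * (η / 2) := by ring
  -- split F into good and bad
  set G : Finset (Fin n → Bool) :=
    Finset.univ.filter (fun σ => σ i = true ∧ g σ ≤ η) with hG
  set B : Finset (Fin n → Bool) :=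
    Finset.univ.filter (fun σ => σ i = true ∧ ¬ g σ ≤ η) with hB
  have hsplit : ∑ σ ∈ F, w σ = ∑ σ ∈ G, w σ + ∑ σ ∈ B, w σ := by
    rw [← Finset.sum_filter_add_sum_filter_not F (fun σ => g σ ≤ η) w]
    congr 1 <;> · rw [hF, Finset.filter_filter]
  -- Markov
  have hBsub : B ⊆ F := by
    intro σ hσ
    rw [hB, Finset.mem_filter] at hσ
    rw [hF, Finset.mem_filter]
    exact ⟨hσ.1, hσ.2.1⟩
  have hmarkov : η * ∑ σ ∈ B, w σ ≤ ∑ σ ∈ F, w σ * g σ := by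
    calc η * ∑ σ ∈ B, w σ = ∑ σ ∈ B, η * w σ := Finset.mul_sum _ _ _
      _ ≤ ∑ σ ∈ B, w σ * g σ := by
          refine Finset.sum_le_sum fun σ hσ => ?_
          have hσ' := (Finset.mem_filter.mp hσ).2.2
          rw [mul_comm]
          exact mul_le_mul_of_nonneg_left (le_of_not_ge hσ') (hw0 σ)
      _ ≤ ∑ σ ∈ F, w σ * g σ := by
          refine Finset.sum_le_sum_of_subset_of_nonneg hBsub fun σ _ _ => ?_
          exact mul_nonneg (hw0 σ) (hg0 σ)
  have hB4 : ∑ σ ∈ B, w σ ≤ η / 4 := by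
    have : η * ∑ σ ∈ B, w σ ≤ η * (η / 4) := by
      calc η * ∑ σ ∈ B, w σ ≤ η / 2 * (η / 2) := hmarkov.trans h2
        _ = η * (η / 4) := by ring
    exact le_of_mul_le_mul_left this hη0
  have hGval : ∑ σ ∈ G, w σ = η / 2 - ∑ σ ∈ B, w σ := by linarith [hsplit, h1]
  show η / 4 ≤ ∑ σ ∈ G, w σ
  linarith
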